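/- arXiv:1611.05001 — 3 statements merged into one kernel-verified Lean document; each statement's English description precedes it below -/
import Mathlib

section
/- Existence of sparse minimal formulas: if a numerical differentiation formula of polynomial exactness order q exists on X = {x₁,…,x_N}, then for any μ ≥ 0 there exists a ‖·‖_{1,μ}-minimal formula of order q whose weight vector has at most dim Π_q^d = binom(d+q-1, d) nonzero components. -/
open scoped BigOperators

/-- Partial derivative in the `i`-th coordinate direction. -/
noncomputable def pd {d : ℕ} (i : Fin d) (f : EuclideanSpace ℝ (Fin d) → ℝ) :
    EuclideanSpace ℝ (Fin d) → ℝ :=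
  fun x => lineDeriv ℝ f x (EuclideanSpace.single i 1)

/-- Multi-index partial derivative ∂^α f. -/
noncomputable def pdMulti {d : ℕ} (α : Fin d → ℕ) (f : EuclideanSpace ℝ (Fin d) → ℝ) :
    EuclideanSpace ℝ (Fin d) → ℝ :=
  (List.ofFn (fun i : Fin d => (pd i)^[α i])).foldr (· ∘ ·) id f

/-- The linear differential operator D = ∑_{|α|≤k} c_α ∂^α applied to f at y. -/
noncomputable def Dapply {d : ℕ} (k : ℕ)
    (c : (Fin d → ℕ) → EuclideanSpace ℝ (Fin d) → ℝ)
    (f : EuclideanSpace ℝ (Fin d) → ℝ) (y : EuclideanSpace ℝ (Fin d)) : ℝ :=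
  ∑ s ∈ Finset.range (k + 1), ∑ α ∈ Finset.Nat.antidiagonalTuple d s,
    c α y * pdMulti α f y

/-- Evaluation of a d-variate polynomial at a point of ℝ^d. -/
noncomputable def evalP {d : ℕ} (P : MvPolynomial (Fin d) ℝ)
    (y : EuclideanSpace ℝ (Fin d)) : ℝ :=
  MvPolynomial.eval (fun i => y i) P

lemma abs_lin (a c : ℝ) (h : |c| ≤ |a|) : |a + c| = |a| + Real.sign a * c := by
  rcases lt_trichotomy a 0 with ha | rfl | ha
  · rw [Real.sign_of_neg ha]
    rw [abs_of_neg ha] at h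
    have h1 := abs_le.mp h
    rw [abs_of_neg ha, abs_of_nonpos (by linarith [h1.2])]
    ring
  · have hc : c = 0 := by simpa using h
    simp [hc]
  · rw [Real.sign_of_pos ha]
    rw [abs_of_pos ha] at h
    have h1 := abs_le.mp h
    rw [abs_of_pos ha, abs_of_nonneg (by linarith [h1.1])]
    ring

lemma cardA (d q : ℕ) (hq : 1 ≤ q) :
    ∃ A : Finset (Fin d → ℕ), (∀ α : Fin d → ℕ, α ∈ A ↔ ∑ i, α i < q) ∧
      A.card ≤ (d + q - 1).choose d := by
  classical
  refine ⟨(Finset.piAntidiag (Finset.univ : Finset (Fin (d+1))) (q-1)).image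
      (fun f => f ∘ Fin.castSucc), fun α => ?_, ?_⟩
  · simp only [Finset.mem_image, Finset.mem_piAntidiag]
    constructor
    · rintro ⟨f, ⟨hf, -⟩, rfl⟩
      have h2 : ∑ i : Fin d, f (Fin.castSucc i) + f (Fin.last d) = q - 1 := by
        rw [← Fin.sum_univ_castSucc]; exact hf
      simp only [Function.comp]
      omega
    · intro hlt
      refine ⟨Fin.snoc α (q - 1 - ∑ i, α i), ⟨?_, fun _ _ => Finset.mem_univ _⟩, ?_⟩
      · rw [Fin.sum_univ_castSucc]
        simp only [Fin.snoc_castSucc, Fin.snoc_last]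
        omega
      · funext i; simp [Fin.snoc_castSucc]
  · refine Finset.card_image_le.trans ?_
    have h1 : (Finset.piAntidiag (Finset.univ : Finset (Fin (d+1))) (q-1)).card
        = Fintype.card (Sym (Fin (d+1)) (q-1)) := by
      rw [← Finset.map_sym_eq_piAntidiag, Finset.card_map, Finset.sym_univ, Finset.card_univ]
    rw [h1, Sym.card_sym_eq_choose, Fintype.card_fin]
    have e1 : d + 1 + (q-1) - 1 = d + q - 1 := by omega
    rw [e1]
    refine le_of_eq ?_
    rw [← Nat.choose_symm (by omega : q - 1 ≤ d + q - 1)]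
    congr 1
    omega


lemma exists_minimizer {N : ℕ} {ι : Type*} [Fintype ι]
    (T : (Fin N → ℝ) →ₗ[ℝ] (ι → ℝ)) (r : Fin N → ℝ) (hr : ∀ j, 0 ≤ r j)
    (w0 : Fin N → ℝ) :
    ∃ w, T w = T w0 ∧ ∀ v, T v = T w0 → ∑ j, |w j| * r j ≤ ∑ j, |v j| * r j := by
  classical
  by_cases hP0 : ∀ j, r j = 0
  · refine ⟨w0, rfl, fun v _ => ?_⟩
    simp [hP0]
  push_neg at hP0
  set P := {j : Fin N // r j ≠ 0}
  haveI : Nonempty P := ⟨⟨hP0.choose, hP0.choose_spec⟩⟩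
  set π : (Fin N → ℝ) →ₗ[ℝ] (P → ℝ) :=
    LinearMap.funLeft ℝ ℝ (fun p : P => (p : Fin N)) with hπ
  set g : (P → ℝ) → ℝ := fun u => ∑ p : P, |u p| * r p.1 with hg
  have hfg : ∀ w : Fin N → ℝ, ∑ j, |w j| * r j = g (π w) := by
    intro w
    have e1 : ∑ j ∈ Finset.univ.filter (fun j => r j ≠ 0), |w j| * r j
        = ∑ j : Fin N, |w j| * r j :=
      Finset.sum_filter_of_ne (fun x _ hx h0 => hx (by simp [h0]))
    have e2 : ∑ j ∈ Finset.univ.filter (fun j => r j ≠ 0), |w j| * r j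
        = ∑ p : P, |w p.1| * r p.1 :=
      Finset.sum_subtype _ (fun x => by simp) (fun j => |w j| * r j)
    rw [← e1, e2]
    simp [hg, hπ, LinearMap.funLeft_apply]
  have hρ : ∃ ρ : ℝ, 0 < ρ ∧ ∀ p : P, ρ ≤ r p.1 := by
    refine ⟨Finset.univ.inf' Finset.univ_nonempty (fun p : P => r p.1), ?_, ?_⟩
    · rw [Finset.lt_inf'_iff]
      exact fun p _ => lt_of_le_of_ne (hr p.1) (Ne.symm p.2)
    · exact fun p => Finset.inf'_le _ (Finset.mem_univ p)
  obtain ⟨ρ, hρpos, hρle⟩ := hρ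
  have hcoer : ∀ u : P → ℝ, ρ * ‖u‖ ≤ g u := by
    intro u
    have h1 : ‖u‖ ≤ ∑ p : P, |u p| := by
      refine (pi_norm_le_iff_of_nonneg
        (Finset.sum_nonneg fun p _ => abs_nonneg _)).mpr fun p => ?_
      rw [Real.norm_eq_abs]
      exact Finset.single_le_sum (fun q _ => abs_nonneg (u q)) (Finset.mem_univ p)
    calc ρ * ‖u‖ ≤ ρ * ∑ p : P, |u p| := by
          exact mul_le_mul_of_nonneg_left h1 hρpos.le
      _ = ∑ p : P, |u p| * ρ := by rw [Finset.mul_sum]; exact Finset.sum_congr rfl fun p _ => mul_comm _ _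
      _ ≤ g u := Finset.sum_le_sum fun p _ => mul_le_mul_of_nonneg_left (hρle p) (abs_nonneg _)
  have hgcont : Continuous g := by
    exact continuous_finset_sum _ fun p _ => ((continuous_apply p).abs.mul continuous_const)
  set C : Set (P → ℝ) := π '' {w | T w = T w0} with hC_def
  have hC : IsClosed C := by
    have himg : C = (fun y => π w0 + y) '' ((LinearMap.ker T).map π : Set (P → ℝ)) := by
      ext u
      simp only [hC_def, Set.mem_image, Set.mem_setOf_eq, SetLike.mem_coe,
        Submodule.mem_map, LinearMap.mem_ker]
      constructor
      · rintro ⟨w, hw, rfl⟩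
        exact ⟨π (w - w0), ⟨w - w0, by rw [map_sub, hw, sub_self], rfl⟩,
          by rw [map_sub]; abel⟩
      · rintro ⟨y, ⟨v, hv, rfl⟩, rfl⟩
        exact ⟨w0 + v, by rw [map_add, hv, add_zero], by rw [map_add]⟩
    rw [himg]
    exact (Homeomorph.addLeft (π w0)).isClosedMap _
      ((LinearMap.ker T).map π).closed_of_finiteDimensional
  have hu0 : π w0 ∈ C := ⟨w0, rfl, rfl⟩
  set R : ℝ := g (π w0) / ρ with hR
  set K : Set (P → ℝ) := C ∩ Metric.closedBall 0 R with hK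
  have hu0K : π w0 ∈ K := by
    refine ⟨hu0, ?_⟩
    rw [Metric.mem_closedBall, dist_zero_right, hR]
    rw [le_div_iff₀ hρpos]
    calc ‖π w0‖ * ρ = ρ * ‖π w0‖ := mul_comm _ _
      _ ≤ g (π w0) := hcoer _
  have hKcpt : IsCompact K := (isCompact_closedBall (0 : P → ℝ) R).inter_left hC
  obtain ⟨u, huK, hminK⟩ := hKcpt.exists_isMinOn ⟨π w0, hu0K⟩ hgcont.continuousOn
  obtain ⟨w, hw, hπw⟩ := huK.1
  refine ⟨w, hw, fun v hv => ?_⟩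
  rw [hfg w, hfg v, hπw]
  by_cases hvK : π v ∈ Metric.closedBall (0 : P → ℝ) R
  · exact hminK ⟨⟨v, hv, rfl⟩, hvK⟩
  · have h1 : R < ‖π v‖ := by
      rw [Metric.mem_closedBall, dist_zero_right, not_le] at hvK
      exact hvK
    have h2 : g (π w0) < ρ * ‖π v‖ := by
      rw [hR, div_lt_iff₀ hρpos] at h1
      calc g (π w0) < ‖π v‖ * ρ := h1
        _ = ρ * ‖π v‖ := mul_comm _ _
    have h3 : g u ≤ g (π w0) := hminK hu0K
    have h4 := hcoer (π v)
    linarith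


lemma sparsify {N : ℕ} {ι : Type*} [Fintype ι]
    (T : (Fin N → ℝ) →ₗ[ℝ] (ι → ℝ)) (r : Fin N → ℝ) (hr : ∀ j, 0 ≤ r j)
    (w0 : Fin N → ℝ) :
    ∃ w, T w = T w0 ∧ (∀ v, T v = T w0 → ∑ j, |w j| * r j ≤ ∑ j, |v j| * r j) ∧
      (Finset.univ.filter (fun j => w j ≠ 0)).card ≤ Fintype.card ι := by
  classical
  obtain ⟨w₁, hw₁, hmin₁⟩ := exists_minimizer T r hr w0
  suffices h : ∀ n (w : Fin N → ℝ), (Finset.univ.filter (fun j => w j ≠ 0)).card ≤ n →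
      T w = T w0 → (∀ v, T v = T w0 → ∑ j, |w j| * r j ≤ ∑ j, |v j| * r j) →
      ∃ w', T w' = T w0 ∧ (∀ v, T v = T w0 → ∑ j, |w' j| * r j ≤ ∑ j, |v j| * r j) ∧
        (Finset.univ.filter (fun j => w' j ≠ 0)).card ≤ Fintype.card ι by
    exact h _ w₁ le_rfl hw₁ hmin₁
  intro n
  induction n with
  | zero =>
    intro w hcard hw hmin
    exact ⟨w, hw, hmin, hcard.trans (Nat.zero_le _)⟩
  | succ n ih =>
    intro w hcard hw hmin
    by_cases hle : (Finset.univ.filter (fun j => w j ≠ 0)).card ≤ Fintype.card ι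
    · exact ⟨w, hw, hmin, hle⟩
    push_neg at hle
    -- linear dependence of the columns indexed by the support
    have hdep : ¬ LinearIndependent ℝ
        (fun j : {j : Fin N // w j ≠ 0} => T (Pi.single (j : Fin N) 1)) := by
      intro hli
      have h1 := hli.fintype_card_le_finrank
      rw [Fintype.card_subtype, Module.finrank_pi] at h1
      omega
    obtain ⟨g, hg, j0, hj0⟩ := Fintype.not_linearIndependent_iff.mp hdep
    set u : Fin N → ℝ := fun j => if h : w j ≠ 0 then g ⟨j, h⟩ else 0 with hu_def
    have hsupp : ∀ j, u j ≠ 0 → w j ≠ 0 := by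
      intro j hj hwj
      exact hj (by simp [hu_def, hwj])
    have hTu : T u = 0 := by
      have hu_sum : u = ∑ j : Fin N, u j • (Pi.single j (1:ℝ) : Fin N → ℝ) := by
        funext i
        simp [Pi.single_apply]
      rw [hu_sum, map_sum]
      simp_rw [map_smul]
      have e1 : ∑ j ∈ Finset.univ.filter (fun j => w j ≠ 0),
          u j • T (Pi.single j 1) = ∑ j : Fin N, u j • T (Pi.single j 1) := by
        refine Finset.sum_filter_of_ne fun x _ hx => ?_
        intro hwx
        exact hx (by simp [hu_def, hwx])
      have e2 : ∑ j ∈ Finset.univ.filter (fun j => w j ≠ 0),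
          u j • T (Pi.single j 1)
          = ∑ j : {j : Fin N // w j ≠ 0}, u j.1 • T (Pi.single (j : Fin N) 1) :=
        Finset.sum_subtype _ (fun x => by simp) _
      rw [← e1, e2]
      have e3 : ∀ j : {j : Fin N // w j ≠ 0}, u j.1 = g j := by
        intro j
        simp [hu_def, j.2]
      calc ∑ j : {j : Fin N // w j ≠ 0}, u j.1 • T (Pi.single (j : Fin N) 1)
          = ∑ j : {j : Fin N // w j ≠ 0}, g j • T (Pi.single (j : Fin N) 1) := by
            exact Finset.sum_congr rfl fun j _ => by rw [e3 j]
        _ = 0 := hg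
    have hj0u : u (j0 : Fin N) ≠ 0 := by
      have : u (j0 : Fin N) = g j0 := by simp [hu_def, j0.2]
      rw [this]; exact hj0
    obtain ⟨τ, hτmem, hτmin⟩ := Finset.exists_min_image
      (Finset.univ.filter (fun j => u j ≠ 0)) (fun j => |w j| / |u j|)
      ⟨j0, by simp [hj0u]⟩
    have huτ : u τ ≠ 0 := (Finset.mem_filter.mp hτmem).2
    have hwτ : w τ ≠ 0 := hsupp τ huτ
    set t : ℝ := -(w τ / u τ) with ht_def
    have hbound : ∀ j, |t * u j| ≤ |w j| := by
      intro j
      by_cases hj : u j = 0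
      · simp [hj]
      · have h1 := hτmin j (Finset.mem_filter.mpr ⟨Finset.mem_univ j, hj⟩)
        have h2 : |t| = |w τ| / |u τ| := by
          rw [ht_def, abs_neg, abs_div]
        rw [abs_mul, h2]
        calc |w τ| / |u τ| * |u j| ≤ |w j| / |u j| * |u j| :=
              mul_le_mul_of_nonneg_right h1 (abs_nonneg _)
          _ = |w j| := div_mul_cancel₀ _ (abs_ne_zero.mpr hj)
    have hexp : ∀ s : ℝ, (∀ j, |s * u j| ≤ |w j|) →
        ∑ j, |w j + s * u j| * r j
          = (∑ j, |w j| * r j) + s * ∑ j, (Real.sign (w j) * u j) * r j := by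
      intro s hs
      rw [Finset.mul_sum, ← Finset.sum_add_distrib]
      refine Finset.sum_congr rfl fun j _ => ?_
      rw [abs_lin _ _ (hs j)]
      ring
    have hbound' : ∀ j, |(-t) * u j| ≤ |w j| := by
      intro j
      rw [neg_mul, abs_neg]
      exact hbound j
    set γ : ℝ := ∑ j, (Real.sign (w j) * u j) * r j with hγ
    have hTmove : ∀ s : ℝ, T (w + s • u) = T w0 := by
      intro s
      rw [map_add, map_smul, hTu, smul_zero, add_zero, hw]
    have happ : ∀ s : ℝ, ∀ j, (w + s • u) j = w j + s * u j := by
      intro s j; simp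
    have h1 : ∑ j, |w j| * r j ≤ (∑ j, |w j| * r j) + t * γ := by
      have := hmin (w + t • u) (hTmove t)
      calc ∑ j, |w j| * r j ≤ ∑ j, |(w + t • u) j| * r j := this
        _ = (∑ j, |w j| * r j) + t * γ := by
            simp_rw [happ t]
            exact hexp t hbound
    have h2 : ∑ j, |w j| * r j ≤ (∑ j, |w j| * r j) + (-t) * γ := by
      have := hmin (w + (-t) • u) (hTmove (-t))
      calc ∑ j, |w j| * r j ≤ ∑ j, |(w + (-t) • u) j| * r j := this
        _ = (∑ j, |w j| * r j) + (-t) * γ := by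
            simp_rw [happ (-t)]
            exact hexp (-t) hbound'
    have htγ : t * γ = 0 := by nlinarith
    set w' : Fin N → ℝ := w + t • u with hw'
    have hw'T : T w' = T w0 := hTmove t
    have hfw' : ∑ j, |w' j| * r j = ∑ j, |w j| * r j := by
      simp_rw [hw', happ t]
      rw [hexp t hbound, htγ, add_zero]
    have hw'min : ∀ v, T v = T w0 → ∑ j, |w' j| * r j ≤ ∑ j, |v j| * r j := by
      intro v hv
      rw [hfw']
      exact hmin v hv
    have hw'τ : w' τ = 0 := by
      rw [hw', happ t, ht_def]
      field_simp
      ring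
    have hw'supp : (Finset.univ.filter (fun j => w' j ≠ 0)) ⊆
        (Finset.univ.filter (fun j => w j ≠ 0)).erase τ := by
      intro j hj
      rw [Finset.mem_filter] at hj
      rw [Finset.mem_erase, Finset.mem_filter]
      refine ⟨?_, Finset.mem_univ j, ?_⟩
      · rintro rfl
        exact hj.2 hw'τ
      · intro hwj
        apply hj.2
        have huj : u j = 0 := by simp [hu_def, hwj]
        simp [hw', happ t, hwj, huj]
    have hτsupp : τ ∈ Finset.univ.filter (fun j => w j ≠ 0) :=
      Finset.mem_filter.mpr ⟨Finset.mem_univ τ, hwτ⟩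
    have hcard' : (Finset.univ.filter (fun j => w' j ≠ 0)).card ≤ n := by
      have := Finset.card_le_card hw'supp
      rw [Finset.card_erase_of_mem hτsupp] at this
      omega
    exact ih w' hcard' hw'T hw'min


/-- Existence of sparse minimal formulas. If some formula of polynomial
exactness order q exists on X = {x₁,…,x_N}, then for any μ ≥ 0 there is a
‖·‖_{1,μ}-minimal formula of order q whose weight vector has at most
dim Π_q^d = binom(d+q-1,d) nonzero components. -/
theorem sparse_minimal_formula (d k q N : ℕ)
    (c : (Fin d → ℕ) → EuclideanSpace ℝ (Fin d) → ℝ)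
    (z : EuclideanSpace ℝ (Fin d)) (x : Fin N → EuclideanSpace ℝ (Fin d))
    (hex : ∃ w : Fin N → ℝ, ∀ P : MvPolynomial (Fin d) ℝ, P.totalDegree < q →
      Dapply k c (evalP P) z = ∑ j, w j * evalP P (x j))
    (μ : ℝ) (hμ : 0 ≤ μ) :
    ∃ w : Fin N → ℝ,
      (∀ P : MvPolynomial (Fin d) ℝ, P.totalDegree < q →
        Dapply k c (evalP P) z = ∑ j, w j * evalP P (x j)) ∧
      (∀ v : Fin N → ℝ,
        (∀ P : MvPolynomial (Fin d) ℝ, P.totalDegree < q →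
          Dapply k c (evalP P) z = ∑ j, v j * evalP P (x j)) →
        ∑ j, |w j| * ‖x j - z‖ ^ μ ≤ ∑ j, |v j| * ‖x j - z‖ ^ μ) ∧
      (Finset.univ.filter (fun j => w j ≠ 0)).card ≤ (d + q - 1).choose d := by
  classical
  obtain ⟨w0, hw0⟩ := hex
  by_cases hq : q = 0
  · refine ⟨0, ?_, ?_, ?_⟩
    · intro P hP
      exact absurd hP (by omega)
    · intro v _
      simp only [Pi.zero_apply, abs_zero, zero_mul, Finset.sum_const_zero]
      exact Finset.sum_nonneg fun j _ =>
        mul_nonneg (abs_nonneg _) (Real.rpow_nonneg (norm_nonneg _) _)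
    · simp
  obtain ⟨A, hAmem, hAcard⟩ := cardA d q (by omega)
  set r : Fin N → ℝ := fun j => ‖x j - z‖ ^ μ with hr_def
  have hr : ∀ j, 0 ≤ r j := fun j => Real.rpow_nonneg (norm_nonneg _) _
  set Mx : Matrix {α // α ∈ A} (Fin N) ℝ :=
    fun α j => ∏ i, (x j) i ^ (α.1 i) with hMx
  set T : (Fin N → ℝ) →ₗ[ℝ] ({α // α ∈ A} → ℝ) := Mx.mulVecLin with hT
  have hTapp : ∀ (w : Fin N → ℝ) (α : {α // α ∈ A}),
      T w α = ∑ j, w j * ∏ i, (x j) i ^ (α.1 i) := by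
    intro w α
    show Matrix.mulVec Mx w α = _
    simp [hT, hMx, Matrix.mulVecLin_apply, Matrix.mulVec, dotProduct, mul_comm]
  -- monomial evaluation
  have hmono : ∀ (α : Fin d → ℕ) (j : Fin N),
      evalP (MvPolynomial.monomial (Finsupp.equivFunOnFinite.symm α) 1) (x j)
        = ∏ i, (x j) i ^ α i := by
    intro α j
    rw [evalP, MvPolynomial.eval_monomial, one_mul]
    rw [Finsupp.prod_fintype _ _ (fun i => pow_zero _)]
    simp [Finsupp.equivFunOnFinite]
  have hdeg : ∀ α : Fin d → ℕ,
      (MvPolynomial.monomial (Finsupp.equivFunOnFinite.symm α) (1:ℝ)).totalDegree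
        = ∑ i, α i := by
    intro α
    rw [MvPolynomial.totalDegree_monomial _ one_ne_zero]
    rw [Finsupp.sum_fintype _ _ (fun i => rfl)]
    simp [Finsupp.equivFunOnFinite]
  -- equal sums for polys of low degree when T agrees
  have hTspan : ∀ w v : Fin N → ℝ, T w = T v →
      ∀ P : MvPolynomial (Fin d) ℝ, P.totalDegree < q →
        ∑ j, w j * evalP P (x j) = ∑ j, v j * evalP P (x j) := by
    intro w v hwv P hP
    have expand : ∀ w : Fin N → ℝ, ∑ j, w j * evalP P (x j)
        = ∑ m ∈ P.support, MvPolynomial.coeff m P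
            * ∑ j, w j * ∏ i, (x j) i ^ m i := by
      intro w
      simp only [evalP, MvPolynomial.eval_eq']
      simp_rw [Finset.mul_sum]
      rw [Finset.sum_comm]
      refine Finset.sum_congr rfl fun m _ => ?_
      exact Finset.sum_congr rfl fun j _ => by ring
    rw [expand w, expand v]
    refine Finset.sum_congr rfl fun m hm => ?_
    have hmq : ∑ i, m i < q := by
      have h1 := MvPolynomial.le_totalDegree hm
      rw [Finsupp.sum_fintype _ _ (fun i => rfl)] at h1
      omega
    have hmA : (m : Fin d → ℕ) ∈ A := (hAmem _).mpr hmq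
    have h2 := congrFun hwv ⟨(m : Fin d → ℕ), hmA⟩
    rw [hTapp, hTapp] at h2
    rw [h2]
  -- feasibility characterization
  have hfeas : ∀ w : Fin N → ℝ,
      (∀ P : MvPolynomial (Fin d) ℝ, P.totalDegree < q →
        Dapply k c (evalP P) z = ∑ j, w j * evalP P (x j)) ↔ T w = T w0 := by
    intro w
    constructor
    · intro h
      funext α
      have hαq : ∑ i, (α.1 : Fin d → ℕ) i < q := (hAmem _).mp α.2
      have h1 := h (MvPolynomial.monomial (Finsupp.equivFunOnFinite.symm α.1) 1)
        (by rw [hdeg]; exact hαq)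
      have h2 := hw0 (MvPolynomial.monomial (Finsupp.equivFunOnFinite.symm α.1) 1)
        (by rw [hdeg]; exact hαq)
      rw [hTapp, hTapp]
      simp_rw [← hmono]
      rw [← h1, ← h2]
    · intro hTw P hP
      rw [hw0 P hP]
      exact hTspan w0 w hTw.symm P hP
  obtain ⟨w, hTww0, hwmin, hwcard⟩ := sparsify T r hr w0
  refine ⟨w, (hfeas w).mpr hTww0, fun v hv => hwmin v ((hfeas v).mp hv), ?_⟩
  refine hwcard.trans ?_
  rw [Fintype.card_coe]
  exact hAcard
end

section
/- Every positive formula for a second-order elliptic operator D that is exact of order q ∈ {3,4} is ‖·‖_{1,2}-minimal, with ‖w‖_{1,2} = ρ_{q,D}(z,X,1,2) = τ_D(z) := 2∑_{|α|=1} c_{2α}(z). -/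
open scoped BigOperators

-- value of coordinate after moving along single direction
lemma coord_move {d : ℕ} (i i' : Fin d) (y : EuclideanSpace ℝ (Fin d)) (t : ℝ) :
    (y + t • EuclideanSpace.single i (1:ℝ)) i' = y i' + t * (if i' = i then 1 else 0) := by
  simp [EuclideanSpace.single_apply, mul_ite]

lemma pd_quadratic {d : ℕ} (z : EuclideanSpace ℝ (Fin d)) (i : Fin d) :
    pd i (fun y => ∑ i', (y i' - z i') ^ 2) = fun y => 2 * (y i - z i) := by
  funext y
  have h : HasLineDerivAt ℝ (fun y : EuclideanSpace ℝ (Fin d) => ∑ i', (y i' - z i') ^ 2)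
      (2 * (y i - z i)) y (EuclideanSpace.single i 1) := by
    unfold HasLineDerivAt
    have h1 : ∀ i' : Fin d, HasDerivAt (fun t : ℝ => ((y + t • EuclideanSpace.single i (1:ℝ)) i' - z i')^2)
        (2 * (y i' - z i') * (if i' = i then 1 else 0)) 0 := by
      intro i'
      have : HasDerivAt (fun t : ℝ => (y i' + t * (if i' = i then 1 else 0) - z i')^2)
          (2 * (y i' - z i') * (if i' = i then 1 else 0)) 0 := by
        have hb : HasDerivAt (fun t : ℝ => y i' + t * (if i' = i then 1 else 0) - z i')
            (if i' = i then (1:ℝ) else 0) 0 := by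
          simpa using (((hasDerivAt_id (0:ℝ)).mul_const (if i' = i then (1:ℝ) else 0)).const_add (y i')).sub_const (z i')
        have := hb.fun_pow 2
        simpa [mul_comm, mul_assoc, mul_left_comm] using this
      simpa [coord_move] using this
    have := HasDerivAt.fun_sum (u := Finset.univ) (fun i' _ => h1 i')
    simpa [Finset.mul_sum, Finset.sum_ite_eq', mul_comm] using this
  simpa [pd] using h.lineDeriv

lemma pd_linear {d : ℕ} (z : EuclideanSpace ℝ (Fin d)) (i j : Fin d) :
    pd j (fun y => 2 * (y i - z i)) = fun _ => if i = j then 2 else 0 := by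
  funext y
  have h : HasLineDerivAt ℝ (fun y : EuclideanSpace ℝ (Fin d) => 2 * (y i - z i))
      (if i = j then 2 else 0) y (EuclideanSpace.single j 1) := by
    unfold HasLineDerivAt
    have : HasDerivAt (fun t : ℝ => 2 * (y i + t * (if i = j then 1 else 0) - z i))
        (if i = j then (2:ℝ) else 0) 0 := by
      have hb : HasDerivAt (fun t : ℝ => y i + t * (if i = j then 1 else 0) - z i)
          (if i = j then (1:ℝ) else 0) 0 := by
        simpa using (((hasDerivAt_id (0:ℝ)).mul_const (if i = j then (1:ℝ) else 0)).const_add (y i)).sub_const (z i)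
      have := hb.const_mul 2
      simpa [mul_ite] using this
    simpa [coord_move] using this
  simpa [pd] using h.lineDeriv

lemma pd_const {d : ℕ} (i : Fin d) (a : ℝ) :
    pd i (fun _ => a) = fun _ => 0 := by
  funext y
  simp [pd, lineDeriv, deriv_const]

section folds
variable {A : Type*}

lemma foldr_comp_apply (l : List (A → A)) (a : A) :
    l.foldr (· ∘ ·) id a = l.foldr (fun h acc => h acc) a := by
  induction l with
  | nil => rfl
  | cons h t ih => simp [List.foldr_cons, Function.comp, ih]

lemma fold_id (g : A → A) : True := trivial

variable {ι : Type*} [DecidableEq ι]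

lemma foldr_all_id (g : ι → A → A) (l : List ι) (a : A)
    (h : ∀ k ∈ l, g k = id) : l.foldr (fun k acc => g k acc) a = a := by
  induction l with
  | nil => rfl
  | cons k t ih =>
      simp only [List.foldr_cons]
      rw [ih (fun k hk => h k (List.mem_cons_of_mem _ hk)), h k List.mem_cons_self]
      rfl

lemma foldr_single (g : ι → A → A) (l : List ι) (a : A) (i : ι)
    (hnd : l.Nodup) (hi : i ∈ l) (h : ∀ k ∈ l, k ≠ i → g k = id) :
    l.foldr (fun k acc => g k acc) a = g i a := by
  induction l with
  | nil => simp at hi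
  | cons k t ih =>
      simp only [List.foldr_cons]
      rcases List.mem_cons.1 hi with rfl | hit
      · rw [foldr_all_id g t a]
        intro k hk
        exact h k (List.mem_cons_of_mem _ hk) (fun he => (List.nodup_cons.1 hnd).1 (he ▸ hk))
      · have hki : k ≠ i := fun he => (List.nodup_cons.1 hnd).1 (he ▸ hit)
        rw [ih (List.nodup_cons.1 hnd).2 hit (fun m hm => h m (List.mem_cons_of_mem _ hm)), h k List.mem_cons_self hki]
        rfl

lemma foldr_pair (g : ι → A → A) (l : List ι) (a : A) (i j : ι) (hij : i ≠ j)
    (hnd : l.Nodup) (hi : i ∈ l) (hj : j ∈ l) (h : ∀ k, k ≠ i → k ≠ j → g k = id) :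
    l.foldr (fun k acc => g k acc) a = g i (g j a) ∨
    l.foldr (fun k acc => g k acc) a = g j (g i a) := by
  induction l with
  | nil => simp at hi
  | cons k t ih =>
      simp only [List.foldr_cons]
      have hnd' := List.nodup_cons.1 hnd
      rcases List.mem_cons.1 hi with rfl | hit
      · left
        have hjt : j ∈ t := by
          rcases List.mem_cons.1 hj with he | h'
          · exact absurd he.symm hij
          · exact h'
        rw [foldr_single g t a j hnd'.2 hjt (fun m hmt hm => h m (fun he => hnd'.1 (he ▸ hmt)) hm)]
      · rcases List.mem_cons.1 hj with rfl | hjt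
        · right
          rw [foldr_single g t a i hnd'.2 hit (fun m hmt hm => h m hm (fun he => hnd'.1 (he ▸ hmt)))]
        · have hki : k ≠ i := fun he => hnd'.1 (he ▸ hit)
          have hkj : k ≠ j := fun he => hnd'.1 (he ▸ hjt)
          rw [h k hki hkj]
          exact ih hnd'.2 hit hjt

end folds

lemma pdMulti_eq_foldr {d : ℕ} (α : Fin d → ℕ) (f : EuclideanSpace ℝ (Fin d) → ℝ) :
    pdMulti α f = (List.finRange d).foldr (fun k acc => (pd k)^[α k] acc) f := by
  unfold pdMulti
  rw [foldr_comp_apply, List.ofFn_eq_map, List.foldr_map]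

section quad
variable {d : ℕ} (z : EuclideanSpace ℝ (Fin d))

/-- the squared-distance function -/
noncomputable def qf (z : EuclideanSpace ℝ (Fin d)) : EuclideanSpace ℝ (Fin d) → ℝ :=
  fun y => ∑ i', (y i' - z i') ^ 2

lemma pdMulti_qf_zero (α : Fin d → ℕ) (h : ∀ k, α k = 0) :
    pdMulti α (qf z) = qf z := by
  rw [pdMulti_eq_foldr]
  exact foldr_all_id _ _ _ (fun k _ => by simp [h k])

lemma pdMulti_qf_one (α : Fin d → ℕ) (i : Fin d) (hi : α i = 1)
    (h : ∀ k, k ≠ i → α k = 0) :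
    pdMulti α (qf z) = fun y => 2 * (y i - z i) := by
  rw [pdMulti_eq_foldr]
  rw [foldr_single _ _ _ i (List.nodup_finRange d) (List.mem_finRange i)
    (fun k _ hk => by simp [h k hk])]
  rw [hi]
  simp only [Function.iterate_one]
  exact pd_quadratic z i

lemma pdMulti_qf_diag (α : Fin d → ℕ) (i : Fin d) (hi : α i = 2)
    (h : ∀ k, k ≠ i → α k = 0) :
    pdMulti α (qf z) = fun _ => 2 := by
  rw [pdMulti_eq_foldr]
  rw [foldr_single _ _ _ i (List.nodup_finRange d) (List.mem_finRange i)
    (fun k _ hk => by simp [h k hk])]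
  rw [hi]
  show pd i (pd i (qf z)) = _
  rw [show pd i (qf z) = fun y => 2 * (y i - z i) from pd_quadratic z i, pd_linear z i i]
  simp

lemma pdMulti_qf_off (α : Fin d → ℕ) (i j : Fin d) (hij : i ≠ j)
    (hi : α i = 1) (hj : α j = 1) (h : ∀ k, k ≠ i → k ≠ j → α k = 0) :
    pdMulti α (qf z) = fun _ => 0 := by
  rw [pdMulti_eq_foldr]
  have hcase := foldr_pair (fun k => (pd k)^[α k]) (List.finRange d) (qf z) i j hij
    (List.nodup_finRange d) (List.mem_finRange i) (List.mem_finRange j)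
    (fun k hki hkj => by simp [h k hki hkj])
  rcases hcase with hc | hc <;> rw [hc] <;>
    simp only [hi, hj, Function.iterate_one]
  · rw [show pd j (qf z) = fun y => 2 * (y j - z j) from pd_quadratic z j, pd_linear z j i]
    simp [hij.symm]
  · rw [show pd i (qf z) = fun y => 2 * (y i - z i) from pd_quadratic z i, pd_linear z i j]
    simp [hij]

end quad

section classify
variable {d : ℕ}

lemma classify1 (α : Fin d → ℕ) (h1 : ∑ k, α k = 1) :
    ∃ i, α i = 1 ∧ ∀ k, k ≠ i → α k = 0 := by
  obtain ⟨i, hi⟩ : ∃ i, α i ≠ 0 := by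
    by_contra h
    push_neg at h
    simp [h] at h1
  have hsplit : α i + ∑ k ∈ Finset.univ.erase i, α k = 1 := by
    rw [Finset.add_sum_erase _ _ (Finset.mem_univ i)]
    exact h1
  have hi1 : α i = 1 := by omega
  have hz : ∑ k ∈ Finset.univ.erase i, α k = 0 := by omega
  refine ⟨i, hi1, fun k hk => ?_⟩
  exact Finset.sum_eq_zero_iff.1 hz k (by simp [Finset.mem_erase, hk])

lemma classify2 (α : Fin d → ℕ) (h2 : ∑ k, α k = 2) :
    (∃ i, α i = 2 ∧ ∀ k, k ≠ i → α k = 0) ∨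
    (∃ i j, i ≠ j ∧ α i = 1 ∧ α j = 1 ∧ ∀ k, k ≠ i → k ≠ j → α k = 0) := by
  obtain ⟨i, hi⟩ : ∃ i, α i ≠ 0 := by
    by_contra h
    push_neg at h
    simp [h] at h2
  have hsplit : α i + ∑ k ∈ Finset.univ.erase i, α k = 2 := by
    rw [Finset.add_sum_erase _ _ (Finset.mem_univ i)]
    exact h2
  rcases Nat.lt_or_ge (α i) 2 with h | h
  · have hi1 : α i = 1 := by omega
    have hrest : ∑ k ∈ Finset.univ.erase i, α k = 1 := by omega
    obtain ⟨j, hjmem, hj⟩ : ∃ j ∈ Finset.univ.erase i, α j ≠ 0 := by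
      by_contra h'
      push_neg at h'
      rw [Finset.sum_eq_zero h'] at hrest
      omega
    have hji : j ≠ i := (Finset.mem_erase.1 hjmem).1
    have hsplit2 : α j + ∑ k ∈ (Finset.univ.erase i).erase j, α k = 1 := by
      rw [Finset.add_sum_erase _ _ hjmem]
      exact hrest
    have hj1 : α j = 1 := by omega
    have hz : ∑ k ∈ (Finset.univ.erase i).erase j, α k = 0 := by omega
    right
    refine ⟨i, j, hji.symm, hi1, hj1, fun k hki hkj => ?_⟩
    exact Finset.sum_eq_zero_iff.1 hz k (by simp [Finset.mem_erase, hki, hkj])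
  · have hi2 : α i = 2 := by omega
    have hz : ∑ k ∈ Finset.univ.erase i, α k = 0 := by omega
    left
    refine ⟨i, hi2, fun k hk => ?_⟩
    exact Finset.sum_eq_zero_iff.1 hz k (by simp [Finset.mem_erase, hk])

end classify

section sums
variable {d : ℕ} (c : (Fin d → ℕ) → EuclideanSpace ℝ (Fin d) → ℝ)
  (z : EuclideanSpace ℝ (Fin d))

/-- the multiindex 2e_i -/
def Emi {d : ℕ} (i : Fin d) : Fin d → ℕ := fun i' => if i' = i then 2 else 0

lemma qf_at_z : qf z z = 0 := by simp [qf]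

lemma sum0 : ∑ α ∈ Finset.Nat.antidiagonalTuple d 0, c α z * pdMulti α (qf z) z = 0 := by
  refine Finset.sum_eq_zero (fun α hα => ?_)
  have h := (Finset.Nat.mem_antidiagonalTuple).1 hα
  have hz : ∀ k, α k = 0 := fun k => Finset.sum_eq_zero_iff.1 h k (Finset.mem_univ k)
  rw [pdMulti_qf_zero z α hz, qf_at_z, mul_zero]

lemma sum1 : ∑ α ∈ Finset.Nat.antidiagonalTuple d 1, c α z * pdMulti α (qf z) z = 0 := by
  refine Finset.sum_eq_zero (fun α hα => ?_)
  have h := (Finset.Nat.mem_antidiagonalTuple).1 hα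
  obtain ⟨i, hi, ho⟩ := classify1 α h
  rw [pdMulti_qf_one z α i hi ho]
  simp

lemma sum2 : ∑ α ∈ Finset.Nat.antidiagonalTuple d 2, c α z * pdMulti α (qf z) z
    = ∑ i : Fin d, 2 * c (Emi i) z := by
  have step : ∀ α ∈ Finset.Nat.antidiagonalTuple d 2,
      c α z * pdMulti α (qf z) z = ∑ i : Fin d, (if α = Emi i then 2 * c α z else 0) := by
    intro α hα
    have h := (Finset.Nat.mem_antidiagonalTuple).1 hα
    rcases classify2 α h with ⟨i, hi, ho⟩ | ⟨i, j, hij, hi, hj, ho⟩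
    · have hαE : α = Emi i := by
        funext k
        by_cases hk : k = i
        · simp [Emi, hk, hi]
        · simp [Emi, hk, ho k hk]
      rw [pdMulti_qf_diag z α i hi ho]
      rw [Finset.sum_eq_single i]
      · simp [hαE, mul_comm]
      · intro i' _ hi'
        rw [if_neg]
        intro he
        apply hi'
        have h2 : (Emi i i : ℕ) = Emi i' i := congrFun (hαE.symm.trans he) i
        by_cases h3 : i = i'
        · exact h3.symm
        · simp [Emi, h3] at h2
      · simp
    · rw [pdMulti_qf_off z α i j hij hi hj ho]
      rw [Finset.sum_eq_zero]
      · simp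
      · intro i' _
        rw [if_neg]
        intro he
        have := congrFun he i
        simp [Emi, hi] at this
        split at this <;> omega
  rw [Finset.sum_congr rfl step, Finset.sum_comm]
  refine Finset.sum_congr rfl (fun i _ => ?_)
  have hmem : Emi i ∈ Finset.Nat.antidiagonalTuple d 2 := by
    rw [Finset.Nat.mem_antidiagonalTuple]
    simp [Emi]
  rw [Finset.sum_ite_eq' (Finset.Nat.antidiagonalTuple d 2) (Emi i) (fun α => 2 * c α z),
    if_pos hmem]

lemma Dapply_qf : Dapply 2 c (qf z) z = 2 * ∑ i : Fin d, c (Emi i) z := by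
  unfold Dapply
  rw [Finset.sum_range_succ, Finset.sum_range_succ, Finset.sum_range_one]
  rw [sum0 c z, sum1 c z, sum2 c z]
  rw [Finset.mul_sum]
  simp

noncomputable def Pq {d : ℕ} (z : EuclideanSpace ℝ (Fin d)) : MvPolynomial (Fin d) ℝ :=
  ∑ i, (MvPolynomial.X i - MvPolynomial.C (z i)) ^ 2

lemma evalP_Pq (y : EuclideanSpace ℝ (Fin d)) : evalP (Pq z) y = qf z y := by
  simp [evalP, Pq, qf]

lemma deg_Pq : (Pq z).totalDegree ≤ 2 := by
  refine MvPolynomial.totalDegree_finsetSum_le (fun i _ => ?_)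
  refine (MvPolynomial.totalDegree_pow _ 2).trans ?_
  have h1 : (MvPolynomial.X i - MvPolynomial.C (z i) : MvPolynomial (Fin d) ℝ).totalDegree ≤ 1 :=
    (MvPolynomial.totalDegree_sub_C_le _ _).trans (by simp [MvPolynomial.totalDegree_X])
  omega

lemma norm_sq_eq (a b : EuclideanSpace ℝ (Fin d)) : ‖a - b‖ ^ 2 = ∑ i, (a i - b i) ^ 2 := by
  rw [EuclideanSpace.norm_eq, Real.sq_sqrt (by positivity)]
  simp [sq_abs]

end sums

lemma key_eq {d N q : ℕ} (hq : q = 3 ∨ q = 4)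
    (c : (Fin d → ℕ) → EuclideanSpace ℝ (Fin d) → ℝ)
    (z : EuclideanSpace ℝ (Fin d)) (x : Fin (N + 1) → EuclideanSpace ℝ (Fin d))
    (v : Fin (N + 1) → ℝ)
    (hexact : ∀ P : MvPolynomial (Fin d) ℝ, P.totalDegree < q →
      Dapply 2 c (evalP P) z = ∑ j, v j * evalP P (x j)) :
    ∑ j, v j * ‖x j - z‖ ^ 2 = 2 * ∑ i : Fin d, c (Emi i) z := by
  have hdeg : (Pq z).totalDegree < q := lt_of_le_of_lt (deg_Pq z) (by rcases hq with h | h <;> omega)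
  have h := hexact (Pq z) hdeg
  have hev : evalP (Pq z) = qf z := funext (evalP_Pq z)
  rw [hev, Dapply_qf c z] at h
  rw [h]
  refine Finset.sum_congr rfl (fun j _ => ?_)
  rw [norm_sq_eq]
  rfl

/-- Every positive formula for a second-order elliptic operator D that is exact
of order q ∈ {3,4} is ‖·‖_{1,2}-minimal, with
‖w‖_{1,2} = ρ_{q,D}(z,X,1,2) = τ_D(z) = 2 ∑_{|α|=1} c_{2α}(z). -/
theorem positive_formula_minimal (d N q : ℕ) (hq : q = 3 ∨ q = 4)
    (c : (Fin d → ℕ) → EuclideanSpace ℝ (Fin d) → ℝ)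
    (z : EuclideanSpace ℝ (Fin d)) (x : Fin (N + 1) → EuclideanSpace ℝ (Fin d))
    (w : Fin (N + 1) → ℝ)
    (helliptic : ∀ ξ : Fin d → ℝ, ξ ≠ 0 →
      0 < ∑ α ∈ Finset.Nat.antidiagonalTuple d 2, c α z * ∏ i, ξ i ^ α i)
    (hx0 : x 0 = z) (hw0 : w 0 < 0) (hwj : ∀ j : Fin (N + 1), j ≠ 0 → 0 < w j)
    (hexact : ∀ P : MvPolynomial (Fin d) ℝ, P.totalDegree < q →
      Dapply 2 c (evalP P) z = ∑ j, w j * evalP P (x j)) :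
    (∑ j, |w j| * ‖x j - z‖ ^ 2 =
        2 * ∑ i : Fin d, c (fun i' => if i' = i then 2 else 0) z) ∧
    (∀ v : Fin (N + 1) → ℝ,
      (∀ P : MvPolynomial (Fin d) ℝ, P.totalDegree < q →
        Dapply 2 c (evalP P) z = ∑ j, v j * evalP P (x j)) →
      2 * ∑ i : Fin d, c (fun i' => if i' = i then 2 else 0) z ≤
        ∑ j, |v j| * ‖x j - z‖ ^ 2) := by
  have hEmi : ∀ i : Fin d, (fun i' => if i' = i then 2 else 0) = Emi i := fun i => rfl
  constructor
  · have hkey := key_eq hq c z x w hexact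
    have habs : ∑ j, |w j| * ‖x j - z‖ ^ 2 = ∑ j, w j * ‖x j - z‖ ^ 2 := by
      refine Finset.sum_congr rfl (fun j _ => ?_)
      by_cases hj : j = 0
      · subst hj
        rw [hx0]
        simp
      · rw [abs_of_pos (hwj j hj)]
    rw [habs, hkey]
    simp only [hEmi]
  · intro v hv
    have hkey := key_eq hq c z x v hv
    simp only [hEmi]
    rw [← hkey]
    refine Finset.sum_le_sum (fun j _ => ?_)
    exact mul_le_mul_of_nonneg_right (le_abs_self _) (by positivity)
end

section
/- Scaling of the growth function: for a homogeneous linear differential operator D of order k (c_α = 0 for |α| < k) and the scaled set X^h with points z + h(xⱼ - z), the weighted ℓ₁ growth function satisfies ρ_{q,D}(z,X^h,1,μ) = h^{μ-k} ρ_{q,D}(z,X,1,μ) for all h > 0 and μ ≥ 0. -/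
open scoped BigOperators
open scoped Pointwise

/-- The weighted ℓ₁ growth function ρ_{q,D}(z,X,1,μ) in its dual (infimum) form. -/
noncomputable def rho1 {d N : ℕ} (k q : ℕ)
    (c : (Fin d → ℕ) → EuclideanSpace ℝ (Fin d) → ℝ)
    (z : EuclideanSpace ℝ (Fin d)) (x : Fin N → EuclideanSpace ℝ (Fin d)) (μ : ℝ) : ℝ :=
  sInf {r : ℝ | ∃ w : Fin N → ℝ,
    (∀ P : MvPolynomial (Fin d) ℝ, P.totalDegree < q →
      Dapply k c (evalP P) z = ∑ j, w j * evalP P (x j)) ∧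
    r = ∑ j, |w j| * ‖x j - z‖ ^ μ}

section Aux

open MvPolynomial

variable {d : ℕ}

lemma eval_bind₁' (f : Fin d → MvPolynomial (Fin d) ℝ) (P : MvPolynomial (Fin d) ℝ)
    (x : Fin d → ℝ) :
    eval x (bind₁ f P) = eval (fun i => eval x (f i)) P := by
  rw [show (eval x : MvPolynomial (Fin d) ℝ →+* ℝ) = eval₂Hom (RingHom.id ℝ) x from rfl,
    eval₂Hom_bind₁]
  rfl

lemma key (i : Fin d) (P : MvPolynomial (Fin d) ℝ) (y : Fin d → ℝ) :
    HasDerivAt (fun t : ℝ => eval (fun j => y j + t * (if j = i then (1:ℝ) else 0)) P)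
      (eval y (pderiv i P)) 0 := by
  induction P using MvPolynomial.induction_on with
  | C a => simpa using hasDerivAt_const (0:ℝ) a
  | add p q hp hq => simp only [map_add]; exact hp.add hq
  | mul_X p j hp =>
      have hx : HasDerivAt (fun t : ℝ => y j + t * (if j = i then (1:ℝ) else 0))
          (if j = i then (1:ℝ) else 0) 0 := by
        simpa using ((hasDerivAt_id (0:ℝ)).mul_const (if j = i then (1:ℝ) else 0)).const_add (y j)
      have : HasDerivAt (fun t : ℝ => eval (fun j => y j + t * (if j = i then (1:ℝ) else 0)) p
          * (y j + t * (if j = i then (1:ℝ) else 0))) _ 0 := hp.mul hx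
      simp only [map_mul, eval_X, pderiv_mul, map_add, eval_mul] at this ⊢
      convert this using 1 <;> simp [Pi.single_apply, mul_comm]

lemma pd_evalP (i : Fin d) (P : MvPolynomial (Fin d) ℝ) :
    pd i (evalP P) = evalP (pderiv i P) := by
  funext y
  simp only [pd, lineDeriv, evalP]
  rw [show (fun t : ℝ => eval (fun j => (y + t • EuclideanSpace.single i (1:ℝ)) j) P)
      = fun t : ℝ => eval (fun j => y j + t * (if j = i then (1:ℝ) else 0)) P by
    funext t
    refine congrArg (fun v => eval v P) ?_
    funext j
    simp [EuclideanSpace.single_apply]]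
  exact (key i P (fun j => y j)).deriv

lemma pd_iter_evalP (i : Fin d) (n : ℕ) (P : MvPolynomial (Fin d) ℝ) :
    (pd i)^[n] (evalP P) = evalP ((fun Q => pderiv i Q)^[n] P) := by
  induction n with
  | zero => rfl
  | succ n ih => rw [Function.iterate_succ_apply', Function.iterate_succ_apply', ih, pd_evalP]

/-- Polynomial counterpart of `pdMulti`. -/
noncomputable def pdPoly {d : ℕ} (α : Fin d → ℕ) (P : MvPolynomial (Fin d) ℝ) :
    MvPolynomial (Fin d) ℝ :=
  (List.ofFn (fun i : Fin d => (fun Q => pderiv i Q)^[α i])).foldr (· ∘ ·) id P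

lemma ofFn_foldr_eval : ∀ {n : ℕ} (ι : Fin n → Fin d) (m : Fin n → ℕ)
    (P : MvPolynomial (Fin d) ℝ),
    ((List.ofFn fun t => (pd (ι t))^[m t]).foldr (· ∘ ·) id) (evalP P)
      = evalP (((List.ofFn fun t => (fun Q => pderiv (ι t) Q)^[m t]).foldr (· ∘ ·) id) P) := by
  intro n
  induction n with
  | zero => intro ι m P; simp
  | succ n ih =>
      intro ι m P
      rw [List.ofFn_succ, List.ofFn_succ, List.foldr_cons, List.foldr_cons]
      simp only [Function.comp_apply]
      rw [ih, pd_iter_evalP]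

lemma pdMulti_evalP (α : Fin d → ℕ) (P : MvPolynomial (Fin d) ℝ) :
    pdMulti α (evalP P) = evalP (pdPoly α P) :=
  ofFn_foldr_eval (fun i => i) α P

/-- The affine substitution Xᵢ ↦ (1-a)·zᵢ + a·Xᵢ. -/
noncomputable def scaleMap (a : ℝ) (z : EuclideanSpace ℝ (Fin d)) :
    Fin d → MvPolynomial (Fin d) ℝ :=
  fun i => C ((1 - a) * z i) + C a * X i

lemma pderiv_scale (a : ℝ) (z : EuclideanSpace ℝ (Fin d)) (i : Fin d)
    (P : MvPolynomial (Fin d) ℝ) :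
    pderiv i (bind₁ (scaleMap a z) P) = C a * bind₁ (scaleMap a z) (pderiv i P) := by
  induction P using MvPolynomial.induction_on with
  | C r => simp
  | add p q hp hq => simp [hp, hq, mul_add]
  | mul_X p j hp =>
      rcases eq_or_ne j i with rfl | hne
      · simp [pderiv_mul, hp, scaleMap]; ring
      · simp [pderiv_mul, hp, pderiv_X_of_ne hne, scaleMap]; ring

lemma pderiv_iter_C_mul (i : Fin d) (n : ℕ) (b : ℝ) (R : MvPolynomial (Fin d) ℝ) :
    (fun Q => pderiv i Q)^[n] (C b * R) = C b * (fun Q => pderiv i Q)^[n] R := by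
  induction n with
  | zero => rfl
  | succ n ih => rw [Function.iterate_succ_apply', Function.iterate_succ_apply', ih, pderiv_C_mul]

lemma pderiv_iter_scale (a : ℝ) (z : EuclideanSpace ℝ (Fin d)) (i : Fin d) (n : ℕ)
    (P : MvPolynomial (Fin d) ℝ) :
    (fun Q => pderiv i Q)^[n] (bind₁ (scaleMap a z) P)
      = C (a ^ n) * bind₁ (scaleMap a z) ((fun Q => pderiv i Q)^[n] P) := by
  induction n with
  | zero => simp
  | succ n ih =>
      rw [Function.iterate_succ_apply', ih, pderiv_C_mul, pderiv_scale,
        Function.iterate_succ_apply', ← mul_assoc, ← C_mul, ← pow_succ]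

lemma ofFn_foldr_scale (a : ℝ) (z : EuclideanSpace ℝ (Fin d)) :
    ∀ {n : ℕ} (ι : Fin n → Fin d) (m : Fin n → ℕ) (P : MvPolynomial (Fin d) ℝ),
    ((List.ofFn fun t => (fun Q => pderiv (ι t) Q)^[m t]).foldr (· ∘ ·) id)
        (bind₁ (scaleMap a z) P)
      = C (a ^ (∑ t, m t)) * bind₁ (scaleMap a z)
          (((List.ofFn fun t => (fun Q => pderiv (ι t) Q)^[m t]).foldr (· ∘ ·) id) P) := by
  intro n
  induction n with
  | zero => intro ι m P; simp
  | succ n ih =>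
      intro ι m P
      rw [List.ofFn_succ, List.foldr_cons]
      simp only [Function.comp_apply]
      rw [ih, pderiv_iter_C_mul, pderiv_iter_scale, ← mul_assoc, ← C_mul,
        Fin.sum_univ_succ, pow_add]
      ring_nf

lemma pdPoly_scale (a : ℝ) (z : EuclideanSpace ℝ (Fin d)) (α : Fin d → ℕ)
    (P : MvPolynomial (Fin d) ℝ) :
    pdPoly α (bind₁ (scaleMap a z) P)
      = C (a ^ (∑ i, α i)) * bind₁ (scaleMap a z) (pdPoly α P) :=
  ofFn_foldr_scale a z (fun i => i) α P

lemma evalP_scale (a : ℝ) (z : EuclideanSpace ℝ (Fin d)) (P : MvPolynomial (Fin d) ℝ)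
    (y : EuclideanSpace ℝ (Fin d)) :
    evalP (bind₁ (scaleMap a z) P) y = evalP P (z + a • (y - z)) := by
  simp only [evalP]
  rw [eval_bind₁']
  refine congrArg (fun v => eval v P) ?_
  funext j
  simp only [scaleMap, map_add, map_mul, eval_C, eval_X, PiLp.add_apply, PiLp.smul_apply,
    PiLp.sub_apply, smul_eq_mul]
  ring

lemma totalDegree_scale_le (a : ℝ) (z : EuclideanSpace ℝ (Fin d))
    (P : MvPolynomial (Fin d) ℝ) :
    (bind₁ (scaleMap a z) P).totalDegree ≤ P.totalDegree := by
  have hσ : ∀ i, (scaleMap a z i).totalDegree ≤ 1 := by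
    intro i
    refine (totalDegree_add _ _).trans ?_
    refine max_le (by rw [totalDegree_C]; exact Nat.zero_le 1)
      ((totalDegree_mul _ _).trans ?_)
    simp [totalDegree_X]
  conv_lhs => rw [P.as_sum]
  rw [map_sum]
  refine (totalDegree_finset_sum _ _).trans (Finset.sup_le fun v hv => ?_)
  refine le_trans ?_ (le_totalDegree hv)
  rw [bind₁_monomial]
  refine (totalDegree_mul _ _).trans ?_
  rw [totalDegree_C, zero_add]
  refine (totalDegree_finset_prod _ _).trans ?_
  refine le_trans (Finset.sum_le_sum fun i _ =>
    (totalDegree_pow _ _).trans (Nat.mul_le_mul_left _ (hσ i))) ?_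
  simp [Finsupp.sum]

lemma Dapply_scale (k : ℕ) (c : (Fin d → ℕ) → EuclideanSpace ℝ (Fin d) → ℝ)
    (hhom : ∀ α : Fin d → ℕ, (∑ i, α i) < k → ∀ y, c α y = 0)
    (z : EuclideanSpace ℝ (Fin d)) (a : ℝ) (P : MvPolynomial (Fin d) ℝ) :
    Dapply k c (evalP (bind₁ (scaleMap a z) P)) z = a ^ k * Dapply k c (evalP P) z := by
  unfold Dapply
  rw [Finset.mul_sum]
  refine Finset.sum_congr rfl fun s hs => ?_
  rw [Finset.mul_sum]
  refine Finset.sum_congr rfl fun α hα => ?_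
  have hαs : ∑ i, α i = s := Finset.Nat.mem_antidiagonalTuple.mp hα
  have hz : evalP (bind₁ (scaleMap a z) (pdPoly α P)) z = evalP (pdPoly α P) z := by
    rw [evalP_scale, sub_self, smul_zero, add_zero]
  have hterm : pdMulti α (evalP (bind₁ (scaleMap a z) P)) z
      = a ^ s * pdMulti α (evalP P) z := by
    rw [pdMulti_evalP, pdMulti_evalP, pdPoly_scale, hαs]
    simp only [evalP, map_mul, MvPolynomial.eval_C]
    rw [show MvPolynomial.eval (fun i => z i) (bind₁ (scaleMap a z) (pdPoly α P))
        = MvPolynomial.eval (fun i => z i) (pdPoly α P) from hz]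
  rw [hterm]
  rcases eq_or_lt_of_le (Nat.lt_succ_iff.mp (Finset.mem_range.mp hs)) with hsk | hlt
  · rw [hsk]; ring
  · rw [hhom α (hαs ▸ hlt) z]; ring

end Aux

/-- Scaling of the growth function. For a homogeneous linear differential
operator D of order k (c_α = 0 for |α| < k) and the scaled set X^h with points z + h(xⱼ-z),
ρ_{q,D}(z,X^h,1,μ) = h^{μ-k} ρ_{q,D}(z,X,1,μ) for all h > 0 and μ ≥ 0. -/
theorem growth_function_scaling (d N k q : ℕ)
    (c : (Fin d → ℕ) → EuclideanSpace ℝ (Fin d) → ℝ)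
    (hhom : ∀ α : Fin d → ℕ, (∑ i, α i) < k → ∀ y, c α y = 0)
    (z : EuclideanSpace ℝ (Fin d)) (x : Fin N → EuclideanSpace ℝ (Fin d))
    (μ : ℝ) (hμ : 0 ≤ μ) (h : ℝ) (hh : 0 < h) :
    rho1 k q c z (fun j => z + h • (x j - z)) μ = h ^ (μ - (k : ℝ)) * rho1 k q c z x μ := by
  classical
  set a : ℝ := h ^ (μ - (k : ℝ)) with ha_def
  have ha : 0 ≤ a := Real.rpow_nonneg hh.le _
  have hkne : (h : ℝ) ^ (k : ℕ) ≠ 0 := pow_ne_zero _ hh.ne'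
  have hak : a * h ^ (k : ℕ) = h ^ μ := by
    rw [ha_def, ← Real.rpow_natCast h k, ← Real.rpow_add hh, sub_add_cancel]
  have hnorm : ∀ j, ‖z + h • (x j - z) - z‖ ^ μ = h ^ μ * ‖x j - z‖ ^ μ := by
    intro j
    rw [add_sub_cancel_left, norm_smul, Real.norm_eq_abs, abs_of_pos hh,
      Real.mul_rpow hh.le (norm_nonneg _)]
  have hset : {r : ℝ | ∃ w : Fin N → ℝ,
      (∀ P : MvPolynomial (Fin d) ℝ, P.totalDegree < q →
        Dapply k c (evalP P) z = ∑ j, w j * evalP P (z + h • (x j - z))) ∧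
      r = ∑ j, |w j| * ‖z + h • (x j - z) - z‖ ^ μ}
      = a • {r : ℝ | ∃ w : Fin N → ℝ,
      (∀ P : MvPolynomial (Fin d) ℝ, P.totalDegree < q →
        Dapply k c (evalP P) z = ∑ j, w j * evalP P (x j)) ∧
      r = ∑ j, |w j| * ‖x j - z‖ ^ μ} := by
    ext r
    simp only [Set.mem_smul_set, Set.mem_setOf_eq, smul_eq_mul]
    constructor
    · rintro ⟨w, hw, rfl⟩
      refine ⟨∑ j, |h ^ (k:ℕ) * w j| * ‖x j - z‖ ^ μ,
        ⟨fun j => h ^ (k:ℕ) * w j, fun P hP => ?_, rfl⟩, ?_⟩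
      · have h1 := hw (MvPolynomial.bind₁ (scaleMap h⁻¹ z) P)
          (lt_of_le_of_lt (totalDegree_scale_le _ _ _) hP)
        rw [Dapply_scale k c hhom z h⁻¹ P] at h1
        have h2 : ∀ j, evalP (MvPolynomial.bind₁ (scaleMap h⁻¹ z) P) (z + h • (x j - z))
            = evalP P (x j) := by
          intro j
          rw [evalP_scale, add_sub_cancel_left, smul_smul, inv_mul_cancel₀ hh.ne',
            one_smul, add_sub_cancel]
        simp only [h2] at h1
        have h3 := congrArg (fun t => h ^ (k:ℕ) * t) h1
        simp only [inv_pow, ← mul_assoc, mul_inv_cancel₀ hkne, one_mul,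
          Finset.mul_sum] at h3
        rw [h3]
      · rw [Finset.mul_sum]
        refine Finset.sum_congr rfl fun j _ => ?_
        rw [hnorm j, abs_mul, abs_of_pos (pow_pos hh k), ← hak]
        ring
    · rintro ⟨s, ⟨w, hw, rfl⟩, rfl⟩
      refine ⟨fun j => (h ^ (k:ℕ))⁻¹ * w j, fun P hP => ?_, ?_⟩
      · have h1 := hw (MvPolynomial.bind₁ (scaleMap h z) P)
          (lt_of_le_of_lt (totalDegree_scale_le _ _ _) hP)
        rw [Dapply_scale k c hhom z h P] at h1
        have h2 : ∀ j, evalP (MvPolynomial.bind₁ (scaleMap h z) P) (x j)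
            = evalP P (z + h • (x j - z)) := fun j => evalP_scale h z P (x j)
        simp only [h2] at h1
        have h3 := congrArg (fun t => (h ^ (k:ℕ))⁻¹ * t) h1
        simp only [← mul_assoc, inv_mul_cancel₀ hkne, one_mul, Finset.mul_sum] at h3
        rw [← h3]
      · rw [Finset.mul_sum]
        refine Finset.sum_congr rfl fun j _ => ?_
        rw [hnorm j, abs_mul, abs_inv, abs_of_pos (pow_pos hh k), ← hak]
        field_simp
  calc rho1 k q c z (fun j => z + h • (x j - z)) μ
      = sInf (a • {r : ℝ | ∃ w : Fin N → ℝ,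
        (∀ P : MvPolynomial (Fin d) ℝ, P.totalDegree < q →
          Dapply k c (evalP P) z = ∑ j, w j * evalP P (x j)) ∧
        r = ∑ j, |w j| * ‖x j - z‖ ^ μ}) := by rw [rho1, ← hset]
    _ = a * rho1 k q c z x μ := by
        rw [Real.sInf_smul_of_nonneg ha, rho1, smul_eq_mul]
end
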